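/- Let M and M' be formal real hypersurfaces in ℂᴺ of m-infinite type and m'-infinite type respectively, given in normal coordinates with complexified defining equations w = τ + τᵐ Q̃(z,χ,τ) and w' = τ' + τ'^{m'} Q̃'(z',χ',τ'), where Q̃(z,0,τ) = Q̃(0,χ,τ) = 0, Q̃(z,χ,0) ≢ 0, and similarly for Q̃'. If H = (F,G) is a formal holomorphic map sending M into M' which is transversally nonflat with transversal order k = trord H, then (m' − 1)·k ≤ m − 1. -/

import Mathlib

noncomputable section
open MvPowerSeries Complex

instance {σ : Type*} : IsDomain (MvPowerSeries σ ℂ) := NoZeroDivisors.to_isDomain _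

/-- total degree of a multi-index -/
def deg {σ : Type*} (d : σ →₀ ℕ) : ℕ := d.sum fun _ n => n

/-- substitution of formal power series (intended for substituted series with
vanishing constant term, in which case each coefficient of the result is the
finite sum below) -/
def pssubst {σ τ : Type*} [Fintype σ] [DecidableEq σ] [Fintype τ] [DecidableEq τ]
    (a : σ → MvPowerSeries τ ℂ) (f : MvPowerSeries σ ℂ) : MvPowerSeries τ ℂ :=
  fun μ => ∑ d ∈ Finset.Iic (Finsupp.equivFunOnFinite.symm fun _ => deg μ),
    MvPowerSeries.coeff d f * MvPowerSeries.coeff μ (∏ i, (a i) ^ (d i))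

/-- formal partial derivative ∂/∂X i -/
def pd {σ : Type*} [DecidableEq σ] (i : σ) (f : MvPowerSeries σ ℂ) : MvPowerSeries σ ℂ :=
  fun d => ((d i : ℂ) + 1) * MvPowerSeries.coeff (d + Finsupp.single i 1) f

/-- the series with complex-conjugated coefficients -/
def psconj {σ : Type*} (f : MvPowerSeries σ ℂ) : MvPowerSeries σ ℂ :=
  MvPowerSeries.map (starRingEnd ℂ) f

/-- variables (z, w) of source/target space -/
abbrev Wv (n : ℕ) : Type := Fin n ⊕ Unit
/-- variables (z, χ, τ) for complexified defining equations -/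
abbrev Vv (n : ℕ) : Type := Fin n ⊕ (Fin n ⊕ Unit)
/-- the variable τ -/
def tv (n : ℕ) : Vv n := Sum.inr (Sum.inr ())

/-- substitution (z, w) ↦ (z, Q(z,χ,τ)) -/
def sLHS {n : ℕ} (Q : MvPowerSeries (Vv n) ℂ) : Wv n → MvPowerSeries (Vv n) ℂ
  | Sum.inl i => MvPowerSeries.X (Sum.inl i)
  | Sum.inr _ => Q

/-- substitution (z, w) ↦ (χ, τ) -/
def sBar {n : ℕ} : Wv n → MvPowerSeries (Vv n) ℂ
  | Sum.inl i => MvPowerSeries.X (Sum.inr (Sum.inl i))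
  | Sum.inr _ => MvPowerSeries.X (Sum.inr (Sum.inr ()))

/-- the formal map H = (F, G) sends M = {w = Q(z,χ,τ)} into M' = {w' = Q'(z',χ',τ')}:
G(z,Q(z,χ,τ)) = Q'(F(z,Q(z,χ,τ)), F̄(χ,τ), Ḡ(χ,τ)) -/
def SendsInto {n : ℕ} (Q Q' : MvPowerSeries (Vv n) ℂ)
    (F : Fin n → MvPowerSeries (Wv n) ℂ) (G : MvPowerSeries (Wv n) ℂ) : Prop :=
  pssubst (sLHS Q) G =
    pssubst (fun v => match v with
      | Sum.inl i => pssubst (sLHS Q) (F i)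
      | Sum.inr (Sum.inl i) => pssubst sBar (psconj (F i))
      | Sum.inr (Sum.inr _) => pssubst sBar (psconj G)) Q'

set_option linter.unusedSectionVars false
section Infra
variable {σ τ' : Type*} [Fintype σ] [DecidableEq σ] [Fintype τ'] [DecidableEq τ']

def boxn (σ : Type*) [Fintype σ] [DecidableEq σ] (K : ℕ) : Finset (σ →₀ ℕ) :=
  Finset.Iic (Finsupp.equivFunOnFinite.symm fun _ => K)

lemma mem_boxn {K : ℕ} {d : σ →₀ ℕ} : d ∈ boxn σ K ↔ ∀ i, d i ≤ K := by
  simp [boxn, Finset.mem_Iic, Finsupp.le_def]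

lemma coeff_pssubst (a : σ → MvPowerSeries τ' ℂ) (f : MvPowerSeries σ ℂ) (μ : τ' →₀ ℕ) :
    MvPowerSeries.coeff μ (pssubst a f) =
      ∑ d ∈ boxn σ (deg μ), MvPowerSeries.coeff d f *
        MvPowerSeries.coeff μ (∏ i, (a i) ^ (d i)) := rfl

lemma deg_eq_sum_univ (d : σ →₀ ℕ) : deg d = ∑ i, d i :=
  Finsupp.sum_fintype _ _ (fun _ => rfl)

lemma apply_le_deg (d : σ →₀ ℕ) (i : σ) : d i ≤ deg d := by
  rw [deg_eq_sum_univ]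
  exact Finset.single_le_sum (fun _ _ => Nat.zero_le _) (Finset.mem_univ i)

lemma deg_zero : deg (0 : σ →₀ ℕ) = 0 := by simp [deg]

lemma deg_add (d e : σ →₀ ℕ) : deg (d + e) = deg d + deg e := by
  simp [deg_eq_sum_univ, Finset.sum_add_distrib]

lemma deg_eq_zero_iff {d : σ →₀ ℕ} : deg d = 0 ↔ d = 0 := by
  rw [deg_eq_sum_univ]
  constructor
  · intro h
    ext i
    exact (Finset.sum_eq_zero_iff.1 h) i (Finset.mem_univ i)
  · rintro rfl; simp

/-- weighted order-vanishing predicate -/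
def OZ (w : σ → ℕ) (r : ℕ) (f : MvPowerSeries σ ℂ) : Prop :=
  ∀ d : σ →₀ ℕ, (∑ i, w i * d i) < r → MvPowerSeries.coeff d f = 0

lemma OZ_zero (w : σ → ℕ) (r : ℕ) : OZ w r (0 : MvPowerSeries σ ℂ) := by
  intro d _; simp

lemma OZ_any (w : σ → ℕ) (f : MvPowerSeries σ ℂ) : OZ w 0 f := by
  intro d h; omega

lemma OZ_mono {w : σ → ℕ} {r s : ℕ} (h : s ≤ r) {f : MvPowerSeries σ ℂ} (hf : OZ w r f) :
    OZ w s f := fun d hd => hf d (lt_of_lt_of_le hd h)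

lemma OZ_add {w : σ → ℕ} {r : ℕ} {f g : MvPowerSeries σ ℂ} (hf : OZ w r f) (hg : OZ w r g) :
    OZ w r (f + g) := by
  intro d hd; rw [map_add, hf d hd, hg d hd, add_zero]

lemma OZ_sub {w : σ → ℕ} {r : ℕ} {f g : MvPowerSeries σ ℂ} (hf : OZ w r f) (hg : OZ w r g) :
    OZ w r (f - g) := by
  intro d hd; rw [map_sub, hf d hd, hg d hd, sub_zero]

lemma OZ_mul {w : σ → ℕ} {r s : ℕ} {f g : MvPowerSeries σ ℂ} (hf : OZ w r f) (hg : OZ w s g) :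
    OZ w (r + s) (f * g) := by
  intro d hd
  rw [MvPowerSeries.coeff_mul]
  refine Finset.sum_eq_zero fun p hp => ?_
  rw [Finset.HasAntidiagonal.mem_antidiagonal] at hp
  have hsum : (∑ i, w i * p.1 i) + (∑ i, w i * p.2 i) = ∑ i, w i * d i := by
    rw [← Finset.sum_add_distrib]
    refine Finset.sum_congr rfl fun i _ => ?_
    rw [← Nat.mul_add]
    congr 1
    rw [← hp]; rfl
  rcases Nat.lt_or_ge (∑ i, w i * p.1 i) r with h | h
  · rw [hf _ h, zero_mul]
  · have : (∑ i, w i * p.2 i) < s := by omega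
    rw [hg _ this, mul_zero]

lemma OZ_mul_left {w : σ → ℕ} {r : ℕ} (g : MvPowerSeries σ ℂ) {f : MvPowerSeries σ ℂ}
    (hf : OZ w r f) : OZ w r (g * f) := by
  have := OZ_mul (OZ_any w g) hf
  simpa using this

lemma OZ_mul_right {w : σ → ℕ} {r : ℕ} (g : MvPowerSeries σ ℂ) {f : MvPowerSeries σ ℂ}
    (hf : OZ w r f) : OZ w r (f * g) := by
  have := OZ_mul hf (OZ_any w g)
  simpa using this

lemma OZ_pow {w : σ → ℕ} {r : ℕ} {f : MvPowerSeries σ ℂ} (hf : OZ w r f) (j : ℕ) :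
    OZ w (j * r) (f ^ j) := by
  induction j with
  | zero => simpa using OZ_any w 1
  | succ j ih =>
      have := OZ_mul ih hf
      rw [pow_succ]
      have hjr : (j + 1) * r = j * r + r := by ring
      rw [hjr]; exact this

lemma OZ_prod_pow {w : σ → ℕ} {ω : τ' → ℕ} {a : τ' → MvPowerSeries σ ℂ}
    (ha : ∀ i, OZ w (ω i) (a i)) (d : τ' →₀ ℕ) (s : Finset τ') :
    OZ w (∑ i ∈ s, d i * ω i) (∏ i ∈ s, a i ^ d i) := by
  classical
  induction s using Finset.induction with
  | empty => simpa using OZ_any w 1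
  | insert j s hj ih =>
      rw [Finset.sum_insert hj, Finset.prod_insert hj]
      exact OZ_mul (OZ_pow (ha j) (d j)) ih

lemma coeff_prod_pow_eq_zero {a : σ → MvPowerSeries τ' ℂ}
    (ha : ∀ i, MvPowerSeries.constantCoeff (σ := τ') (R := ℂ) (a i) = 0) {d : σ →₀ ℕ} {μ : τ' →₀ ℕ}
    (hd : d ∉ boxn σ (deg μ)) :
    MvPowerSeries.coeff μ (∏ i, (a i) ^ (d i)) = 0 := by
  have ha1 : ∀ i, OZ (fun _ : τ' => 1) 1 (a i) := by
    intro i e he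
    have hz : ∀ x, e x = 0 := by simpa using he
    have he0 : e = 0 := Finsupp.ext hz
    rw [he0, MvPowerSeries.coeff_zero_eq_constantCoeff]
    exact ha i
  have h := OZ_prod_pow ha1 d Finset.univ
  apply h
  simp only [one_mul, mul_one]
  rw [← deg_eq_sum_univ]
  rw [mem_boxn] at hd
  push_neg at hd
  obtain ⟨i0, hi0⟩ := hd
  have h2 : d i0 ≤ ∑ i, d i :=
    Finset.single_le_sum (f := fun i => d i) (fun _ _ => Nat.zero_le _) (Finset.mem_univ i0)
  omega

/-- key extension lemma: the coefficient formula holds with any larger index set -/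
lemma coeff_pssubst_ext {a : σ → MvPowerSeries τ' ℂ}
    (ha : ∀ i, MvPowerSeries.constantCoeff (σ := τ') (R := ℂ) (a i) = 0) (f : MvPowerSeries σ ℂ)
    {μ : τ' →₀ ℕ} {S : Finset (σ →₀ ℕ)} (hS : boxn σ (deg μ) ⊆ S) :
    MvPowerSeries.coeff μ (pssubst a f) =
      ∑ d ∈ S, MvPowerSeries.coeff d f * MvPowerSeries.coeff μ (∏ i, (a i) ^ (d i)) := by
  rw [coeff_pssubst]
  refine Finset.sum_subset hS fun d _ hd => ?_
  rw [coeff_prod_pow_eq_zero ha hd, mul_zero]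

lemma pssubst_zero (a : σ → MvPowerSeries τ' ℂ) : pssubst a (0 : MvPowerSeries σ ℂ) = 0 := by
  ext μ
  rw [coeff_pssubst]
  simp

lemma pssubst_add (a : σ → MvPowerSeries τ' ℂ) (f g : MvPowerSeries σ ℂ) :
    pssubst a (f + g) = pssubst a f + pssubst a g := by
  ext μ
  rw [map_add, coeff_pssubst, coeff_pssubst, coeff_pssubst, ← Finset.sum_add_distrib]
  refine Finset.sum_congr rfl fun d _ => ?_
  rw [map_add, add_mul]

lemma pssubst_sub (a : σ → MvPowerSeries τ' ℂ) (f g : MvPowerSeries σ ℂ) :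
    pssubst a (f - g) = pssubst a f - pssubst a g := by
  ext μ
  rw [map_sub, coeff_pssubst, coeff_pssubst, coeff_pssubst, ← Finset.sum_sub_distrib]
  refine Finset.sum_congr rfl fun d _ => ?_
  rw [map_sub, sub_mul]

lemma zero_mem_boxn (K : ℕ) : (0 : σ →₀ ℕ) ∈ boxn σ K := by
  rw [mem_boxn]; intro i; simp

lemma pssubst_C (a : σ → MvPowerSeries τ' ℂ) (c : ℂ) :
    pssubst a (MvPowerSeries.C (σ := σ) (R := ℂ) c) = MvPowerSeries.C (σ := τ') (R := ℂ) c := by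
  ext μ
  rw [coeff_pssubst]
  rw [Finset.sum_eq_single_of_mem 0 (zero_mem_boxn _)]
  · have hp : (∏ i, a i ^ ((0 : σ →₀ ℕ) i)) = 1 := by simp
    rw [hp, MvPowerSeries.coeff_one, MvPowerSeries.coeff_C, MvPowerSeries.coeff_C,
      if_pos rfl]
    split <;> simp
  · intro d _ hd
    rw [MvPowerSeries.coeff_C, if_neg hd, zero_mul]

lemma pssubst_one (a : σ → MvPowerSeries τ' ℂ) : pssubst a (1 : MvPowerSeries σ ℂ) = 1 := by
  have := pssubst_C a 1
  simpa using this

lemma coeff_zero_pssubst (a : σ → MvPowerSeries τ' ℂ) (f : MvPowerSeries σ ℂ) :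
    MvPowerSeries.coeff (0 : τ' →₀ ℕ) (pssubst a f) =
      MvPowerSeries.coeff (0 : σ →₀ ℕ) f := by
  rw [coeff_pssubst]
  have hbox : boxn σ (deg (0 : τ' →₀ ℕ)) = {0} := by
    ext d
    rw [mem_boxn, Finset.mem_singleton, deg_zero]
    constructor
    · intro h; ext i; exact Nat.le_zero.1 (h i)
    · rintro rfl i; simp
  rw [hbox, Finset.sum_singleton]
  simp

lemma constantCoeff_pssubst (a : σ → MvPowerSeries τ' ℂ) (f : MvPowerSeries σ ℂ) :
    MvPowerSeries.constantCoeff (σ := τ') (R := ℂ) (pssubst a f) = MvPowerSeries.constantCoeff (σ := σ) (R := ℂ) f := by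
  rw [← MvPowerSeries.coeff_zero_eq_constantCoeff_apply, ← MvPowerSeries.coeff_zero_eq_constantCoeff_apply]
  exact coeff_zero_pssubst a f

lemma pssubst_X {a : σ → MvPowerSeries τ' ℂ}
    (ha : ∀ i, MvPowerSeries.constantCoeff (σ := τ') (R := ℂ) (a i) = 0) (j : σ) :
    pssubst a (MvPowerSeries.X j) = a j := by
  ext μ
  rw [coeff_pssubst_ext ha _ (Finset.subset_insert (Finsupp.single j 1) (boxn σ (deg μ)))]
  rw [Finset.sum_eq_single_of_mem (Finsupp.single j 1) (Finset.mem_insert_self _ _)]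
  · rw [MvPowerSeries.coeff_X, if_pos rfl, one_mul]
    congr 1
    rw [Finset.prod_eq_single j]
    · simp
    · intro i _ hi
      rw [Finsupp.single_eq_of_ne hi, pow_zero]
    · intro h; exact absurd (Finset.mem_univ j) h
  · intro d _ hd
    rw [MvPowerSeries.coeff_X, if_neg hd, zero_mul]

lemma prod_pow_add (a : σ → MvPowerSeries τ' ℂ) (p q : σ →₀ ℕ) :
    (∏ i, a i ^ (p + q) i) = (∏ i, a i ^ p i) * (∏ i, a i ^ q i) := by
  rw [← Finset.prod_mul_distrib]
  exact Finset.prod_congr rfl fun i _ => by rw [Finsupp.add_apply, pow_add]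

lemma pssubst_mul {a : σ → MvPowerSeries τ' ℂ}
    (ha : ∀ i, MvPowerSeries.constantCoeff (σ := τ') (R := ℂ) (a i) = 0) (f g : MvPowerSeries σ ℂ) :
    pssubst a (f * g) = pssubst a f * pssubst a g := by
  classical
  ext μ
  set B := boxn σ (deg μ) with hB
  have hBmem : ∀ {d : σ →₀ ℕ}, d ∈ B ↔ ∀ i, d i ≤ deg μ := fun {d} => mem_boxn
  set H : (σ →₀ ℕ) × (σ →₀ ℕ) → ℂ := fun pq =>
    MvPowerSeries.coeff pq.1 f * MvPowerSeries.coeff pq.2 g *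
      MvPowerSeries.coeff μ (∏ i, a i ^ (pq.1 + pq.2) i) with hH
  have hL : MvPowerSeries.coeff μ (pssubst a (f * g)) = ∑ pq ∈ B ×ˢ B, H pq := by
    rw [coeff_pssubst]
    set B2 := (B ×ˢ B).filter (fun pq => pq.1 + pq.2 ∈ B) with hB2
    have hfib : ∀ d ∈ B, Finset.HasAntidiagonal.antidiagonal d = B2.filter (fun pq => pq.1 + pq.2 = d) := by
      intro d hd
      ext pq
      simp only [Finset.HasAntidiagonal.mem_antidiagonal, hB2, Finset.mem_filter, Finset.mem_product]
      constructor
      · intro h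
        refine ⟨⟨⟨?_, ?_⟩, ?_⟩, h⟩
        · exact hBmem.2 fun i => le_trans (by rw [← h]; simp) (hBmem.1 hd i)
        · exact hBmem.2 fun i => le_trans (by rw [← h]; simp) (hBmem.1 hd i)
        · rw [h]; exact hd
      · exact fun h => h.2
    have e1 : ∀ d ∈ B, MvPowerSeries.coeff d (f * g) *
        MvPowerSeries.coeff μ (∏ i, a i ^ d i)
        = ∑ pq ∈ B2.filter (fun pq => pq.1 + pq.2 = d), H pq := by
      intro d hd
      rw [MvPowerSeries.coeff_mul, ← hfib d hd, Finset.sum_mul]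
      refine Finset.sum_congr rfl fun pq hpq => ?_
      rw [Finset.HasAntidiagonal.mem_antidiagonal] at hpq
      simp only [hH, hpq]
    rw [Finset.sum_congr rfl e1,
      Finset.sum_fiberwise_of_maps_to (fun pq hpq => (Finset.mem_filter.1 hpq).2) H]
    refine Finset.sum_subset (Finset.filter_subset _ _) fun pq hpq hpq2 => ?_
    have hnb : pq.1 + pq.2 ∉ B := fun hc => hpq2 (Finset.mem_filter.2 ⟨hpq, hc⟩)
    simp only [hH]
    rw [coeff_prod_pow_eq_zero ha hnb, mul_zero]
  have hR : MvPowerSeries.coeff μ (pssubst a f * pssubst a g) = ∑ pq ∈ B ×ˢ B, H pq := by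
    rw [MvPowerSeries.coeff_mul]
    have e2 : ∀ x ∈ Finset.HasAntidiagonal.antidiagonal μ,
        MvPowerSeries.coeff x.1 (pssubst a f) * MvPowerSeries.coeff x.2 (pssubst a g)
        = ∑ pq ∈ B ×ˢ B, (MvPowerSeries.coeff pq.1 f * MvPowerSeries.coeff pq.2 g) *
            (MvPowerSeries.coeff x.1 (∏ i, a i ^ pq.1 i) *
             MvPowerSeries.coeff x.2 (∏ i, a i ^ pq.2 i)) := by
      intro x hx
      rw [Finset.HasAntidiagonal.mem_antidiagonal] at hx
      have hd1 : deg x.1 ≤ deg μ := by rw [← hx, deg_add]; omega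
      have hd2 : deg x.2 ≤ deg μ := by rw [← hx, deg_add]; omega
      have hsub1 : boxn σ (deg x.1) ⊆ B := fun d hd =>
        hBmem.2 fun i => le_trans (mem_boxn.1 hd i) hd1
      have hsub2 : boxn σ (deg x.2) ⊆ B := fun d hd =>
        hBmem.2 fun i => le_trans (mem_boxn.1 hd i) hd2
      rw [coeff_pssubst_ext ha f hsub1, coeff_pssubst_ext ha g hsub2, Finset.sum_mul_sum]
      rw [← Finset.sum_product']
      exact Finset.sum_congr rfl fun pq _ => by ring
    rw [Finset.sum_congr rfl e2, Finset.sum_comm]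
    refine Finset.sum_congr rfl fun pq _ => ?_
    rw [← Finset.mul_sum, ← MvPowerSeries.coeff_mul, ← prod_pow_add]
  rw [hL, hR]

lemma pssubst_pow {a : σ → MvPowerSeries τ' ℂ}
    (ha : ∀ i, MvPowerSeries.constantCoeff (σ := τ') (R := ℂ) (a i) = 0) (f : MvPowerSeries σ ℂ) (j : ℕ) :
    pssubst a (f ^ j) = (pssubst a f) ^ j := by
  induction j with
  | zero => simpa using pssubst_one a
  | succ j ih => rw [pow_succ, pow_succ, pssubst_mul ha, ih]

lemma pssubst_prod {a : σ → MvPowerSeries τ' ℂ}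
    (ha : ∀ i, MvPowerSeries.constantCoeff (σ := τ') (R := ℂ) (a i) = 0) {ι : Type*} (s : Finset ι)
    (h : ι → MvPowerSeries σ ℂ) :
    pssubst a (∏ i ∈ s, h i) = ∏ i ∈ s, pssubst a (h i) := by
  classical
  induction s using Finset.induction with
  | empty => simpa using pssubst_one a
  | insert j s hj ih =>
      rw [Finset.prod_insert hj, Finset.prod_insert hj, pssubst_mul ha, ih]

lemma pssubst_comp {τ₂ : Type*} [Fintype τ₂] [DecidableEq τ₂]
    {a : σ → MvPowerSeries τ₂ ℂ} {b : τ₂ → MvPowerSeries τ' ℂ}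
    (ha : ∀ i, MvPowerSeries.constantCoeff (σ := τ₂) (R := ℂ) (a i) = 0)
    (hb : ∀ j, MvPowerSeries.constantCoeff (σ := τ') (R := ℂ) (b j) = 0) (f : MvPowerSeries σ ℂ) :
    pssubst b (pssubst a f) = pssubst (fun i => pssubst b (a i)) f := by
  classical
  ext μ
  set K := deg μ with hK
  set BigS : Finset (σ →₀ ℕ) := boxn σ ((Fintype.card τ₂ + 1) * K) with hBigS
  have hsub0 : boxn σ K ⊆ BigS := fun d hd => mem_boxn.2 fun i =>
    le_trans (mem_boxn.1 hd i) (Nat.le_mul_of_pos_left _ (Nat.succ_pos _))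
  have hc : ∀ i, MvPowerSeries.constantCoeff (σ := τ') (R := ℂ) (pssubst b (a i)) = 0 := fun i => by
    rw [constantCoeff_pssubst]; exact ha i
  rw [coeff_pssubst_ext hc f hsub0]
  rw [coeff_pssubst]
  have e1 : ∀ e ∈ boxn τ₂ K, MvPowerSeries.coeff e (pssubst a f) *
      MvPowerSeries.coeff μ (∏ j, b j ^ e j)
      = ∑ d ∈ BigS, MvPowerSeries.coeff d f *
        (MvPowerSeries.coeff e (∏ i, a i ^ d i) *
          MvPowerSeries.coeff μ (∏ j, b j ^ e j)) := by
    intro e he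
    have hdege : deg e ≤ Fintype.card τ₂ * K := by
      rw [deg_eq_sum_univ]
      calc ∑ j, e j ≤ ∑ _j : τ₂, K := Finset.sum_le_sum fun j _ => mem_boxn.1 he j
        _ = Fintype.card τ₂ * K := by simp [Finset.sum_const, mul_comm]
    have hsub : boxn σ (deg e) ⊆ BigS := fun d hd => mem_boxn.2 fun i => by
      have h1 := mem_boxn.1 hd i
      have h2 : d i ≤ Fintype.card τ₂ * K := le_trans h1 hdege
      have h3 : Fintype.card τ₂ * K ≤ (Fintype.card τ₂ + 1) * K :=
        Nat.mul_le_mul_right _ (Nat.le_succ _)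
      omega
    rw [coeff_pssubst_ext ha f hsub, Finset.sum_mul]
    exact Finset.sum_congr rfl fun d _ => by ring
  rw [Finset.sum_congr rfl e1, Finset.sum_comm]
  refine Finset.sum_congr rfl fun d _ => ?_
  rw [← Finset.mul_sum]
  congr 1
  have e2 : ∑ e ∈ boxn τ₂ K, MvPowerSeries.coeff e (∏ i, a i ^ d i) *
      MvPowerSeries.coeff μ (∏ j, b j ^ e j)
      = MvPowerSeries.coeff μ (pssubst b (∏ i, a i ^ d i)) := by
    rw [coeff_pssubst]
  rw [e2, pssubst_prod hb]
  congr 1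
  exact Finset.prod_congr rfl fun i _ => pssubst_pow hb (a i) (d i)

lemma pssubst_eq_zero {a : σ → MvPowerSeries τ' ℂ} {f : MvPowerSeries σ ℂ}
    (h : ∀ d : σ →₀ ℕ, (∀ i, a i = 0 → d i = 0) → MvPowerSeries.coeff d f = 0) :
    pssubst a f = 0 := by
  ext μ
  rw [coeff_pssubst, MvPowerSeries.coeff_zero]
  refine Finset.sum_eq_zero fun d _ => ?_
  by_cases hd : ∀ i, a i = 0 → d i = 0
  · rw [h d hd, zero_mul]
  · push_neg at hd
    obtain ⟨i, hai, hdi⟩ := hd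
    have : (∏ i, a i ^ d i) = 0 :=
      Finset.prod_eq_zero (Finset.mem_univ i) (by rw [hai, zero_pow hdi])
    rw [this, map_zero, mul_zero]

lemma prod_X_pow_eq_monomial {ι : σ → τ'} (d : σ →₀ ℕ) :
    (∏ i, (MvPowerSeries.X (ι i) : MvPowerSeries τ' ℂ) ^ d i)
      = MvPowerSeries.monomial (Finsupp.mapDomain ι d) 1 := by
  classical
  have h1 : ∀ i : σ, (MvPowerSeries.X (ι i) : MvPowerSeries τ' ℂ) ^ d i
      = MvPowerSeries.monomial (Finsupp.single (ι i) (d i)) 1 :=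
    fun i => MvPowerSeries.X_pow_eq (ι i) (d i)
  rw [Finset.prod_congr rfl fun i _ => h1 i]
  have h2 : ∀ (s : Finset σ), (∏ i ∈ s, (MvPowerSeries.monomial
        (Finsupp.single (ι i) (d i)) 1 : MvPowerSeries τ' ℂ))
      = MvPowerSeries.monomial (∑ i ∈ s, Finsupp.single (ι i) (d i)) 1 := by
    intro s
    induction s using Finset.induction with
    | empty => simp [MvPowerSeries.monomial_zero_one]
    | insert j s hj ih =>
        rw [Finset.prod_insert hj, Finset.sum_insert hj, ih,
          MvPowerSeries.monomial_mul_monomial, one_mul]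
  rw [h2]
  congr 1
  rw [Finsupp.mapDomain]
  rw [Finsupp.sum_fintype]
  intro i
  exact Finsupp.single_zero _

lemma coeff_pssubst_mono {ι : σ → τ'} (hι : Function.Injective ι)
    {a : σ → MvPowerSeries τ' ℂ} {d : σ →₀ ℕ}
    (hai : ∀ i, a i = MvPowerSeries.X (ι i) ∨ (a i = 0 ∧ d i = 0))
    (f : MvPowerSeries σ ℂ) :
    MvPowerSeries.coeff (Finsupp.mapDomain ι d) (pssubst a f) = MvPowerSeries.coeff d f := by
  classical
  set μ := Finsupp.mapDomain ι d with hμ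
  have hdegμ : deg μ = deg d := by
    rw [hμ, deg, deg, Finsupp.sum_mapDomain_index (fun _ => rfl) (fun _ _ _ => rfl)]
  have hprod : ∀ d' : σ →₀ ℕ, (∀ i, a i = 0 → d' i = 0) →
      MvPowerSeries.coeff μ (∏ i, a i ^ d' i) = (if d' = d then 1 else 0) := by
    intro d' hd'
    have : (∏ i, a i ^ d' i) = ∏ i, (MvPowerSeries.X (ι i) : MvPowerSeries τ' ℂ) ^ d' i := by
      refine Finset.prod_congr rfl fun i _ => ?_
      rcases hai i with h | ⟨h0, _⟩
      · rw [h]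
      · rw [h0, hd' i h0, pow_zero, pow_zero]
    rw [this, prod_X_pow_eq_monomial, MvPowerSeries.coeff_monomial]
    by_cases h : d' = d
    · rw [if_pos h, if_pos (by rw [h])]
    · rw [if_neg h, if_neg (fun hc => h ((Finsupp.mapDomain_injective hι) (by rw [← hμ, hc])))]
  rw [coeff_pssubst]
  have hdmem : d ∈ boxn σ (deg μ) := mem_boxn.2 fun i => by
    rw [hdegμ]; exact apply_le_deg d i
  rw [Finset.sum_eq_single_of_mem d hdmem]
  · by_cases hz : ∀ i, a i = 0 → d i = 0
    · rw [hprod d hz, if_pos rfl, mul_one]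
    · push_neg at hz
      obtain ⟨i, hai0, hdi⟩ := hz
      rcases hai i with h | ⟨_, h0⟩
      · rw [hai0] at h
        exfalso
        have := MvPowerSeries.coeff_X (Finsupp.single (ι i) 1) (ι i) (R := ℂ)
        rw [← h, if_pos rfl] at this
        simp at this
      · exact absurd h0 hdi
  · intro d' _ hne
    by_cases hz : ∀ i, a i = 0 → d' i = 0
    · rw [hprod d' hz, if_neg hne, mul_zero]
    · push_neg at hz
      obtain ⟨i, hai0, hdi⟩ := hz
      have : (∏ i, a i ^ d' i) = 0 :=
        Finset.prod_eq_zero (Finset.mem_univ i) (by rw [hai0, zero_pow hdi])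
      rw [this, map_zero, mul_zero]

lemma pssubst_zero_family (f : MvPowerSeries σ ℂ) :
    pssubst (fun _ : σ => (0 : MvPowerSeries τ' ℂ)) f
      = MvPowerSeries.C (σ := τ') (R := ℂ) (MvPowerSeries.constantCoeff (σ := σ) (R := ℂ) f) := by
  ext μ
  rw [coeff_pssubst]
  rw [Finset.sum_eq_single_of_mem 0 (zero_mem_boxn _)]
  · have hp : (∏ _i : σ, (0 : MvPowerSeries τ' ℂ) ^ ((0 : σ →₀ ℕ) _i)) = 1 := by simp
    rw [hp, MvPowerSeries.coeff_one, MvPowerSeries.coeff_C,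
      MvPowerSeries.coeff_zero_eq_constantCoeff_apply]
    split <;> simp
  · intro d _ hd
    have : ∃ i, d i ≠ 0 := by
      by_contra hc
      push_neg at hc
      exact hd (Finsupp.ext fun i => hc i)
    obtain ⟨i, hi⟩ := this
    have : (∏ i, (0 : MvPowerSeries τ' ℂ) ^ d i) = 0 :=
      Finset.prod_eq_zero (Finset.mem_univ i) (zero_pow hi)
    rw [this, map_zero, mul_zero]

lemma OZ_sub_pow {w : τ' → ℕ} {r : ℕ} {x y : MvPowerSeries τ' ℂ} (h : OZ w r (x - y)) (e : ℕ) :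
    OZ w r (x ^ e - y ^ e) := by
  induction e with
  | zero => simpa using OZ_zero w r
  | succ e ih =>
      have : x ^ (e + 1) - y ^ (e + 1) = x ^ e * (x - y) + (x ^ e - y ^ e) * y := by ring
      rw [this]
      exact OZ_add (OZ_mul_left _ h) (OZ_mul_right _ ih)

lemma OZ_sub_prod {w : τ' → ℕ} {r : ℕ} {a b : σ → MvPowerSeries τ' ℂ}
    (h : ∀ i, OZ w r (a i - b i)) (d : σ →₀ ℕ) :
    OZ w r ((∏ i, a i ^ d i) - (∏ i, b i ^ d i)) := by
  classical
  have key : ∀ s : Finset σ, OZ w r ((∏ i ∈ s, a i ^ d i) - (∏ i ∈ s, b i ^ d i)) := by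
    intro s
    induction s using Finset.induction with
    | empty => simpa using OZ_zero w r
    | insert j s hj ih =>
        rw [Finset.prod_insert hj, Finset.prod_insert hj]
        have : a j ^ d j * ∏ i ∈ s, a i ^ d i - b j ^ d j * ∏ i ∈ s, b i ^ d i
            = (a j ^ d j - b j ^ d j) * ∏ i ∈ s, a i ^ d i
              + b j ^ d j * ((∏ i ∈ s, a i ^ d i) - ∏ i ∈ s, b i ^ d i) := by ring
        rw [this]
        exact OZ_add (OZ_mul_right _ (OZ_sub_pow (h j) (d j))) (OZ_mul_left _ ih)
  exact key Finset.univ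

/-- congruence: substituting congruent families yields congruent results -/
lemma OZ_pssubst_sub {w : τ' → ℕ} {r : ℕ} {a b : σ → MvPowerSeries τ' ℂ}
    (h : ∀ i, OZ w r (a i - b i)) (f : MvPowerSeries σ ℂ) :
    OZ w r (pssubst a f - pssubst b f) := by
  intro μ hμ
  rw [map_sub, coeff_pssubst, coeff_pssubst, ← Finset.sum_sub_distrib]
  refine Finset.sum_eq_zero fun d _ => ?_
  rw [← mul_sub]
  have := OZ_sub_prod h d μ hμ
  rw [map_sub] at this
  rw [this, mul_zero]

/-- indicator weight at a variable -/
def wv (v : σ) : σ → ℕ := fun i => if i = v then 1 else 0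

lemma wv_sum (v : σ) (d : σ →₀ ℕ) : ∑ i, wv v i * d i = d v := by
  rw [Finset.sum_eq_single v]
  · simp [wv]
  · intro i _ hi; simp [wv, hi]
  · intro h; exact absurd (Finset.mem_univ v) h

lemma OZ_wv_iff {v : σ} {r : ℕ} {f : MvPowerSeries σ ℂ} :
    OZ (wv v) r f ↔ ∀ d : σ →₀ ℕ, d v < r → MvPowerSeries.coeff d f = 0 := by
  unfold OZ
  constructor
  · intro h d hd; exact h d (by rw [wv_sum]; exact hd)
  · intro h d hd; exact h d (by rw [wv_sum] at hd; exact hd)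

lemma OZ_X_pow (v : σ) (j : ℕ) : OZ (wv v) j ((MvPowerSeries.X v : MvPowerSeries σ ℂ) ^ j) := by
  rw [OZ_wv_iff]
  intro d hd
  rw [MvPowerSeries.coeff_X_pow, if_neg]
  intro hc
  rw [hc] at hd
  simp at hd

lemma OZ_shift {v : σ} {r s : ℕ} {h : MvPowerSeries σ ℂ}
    (H : OZ (wv v) (r + s) ((MvPowerSeries.X v : MvPowerSeries σ ℂ) ^ r * h)) :
    OZ (wv v) s h := by
  rw [OZ_wv_iff] at H ⊢
  intro μ hμ
  have key : MvPowerSeries.coeff (μ + Finsupp.single v r)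
      ((MvPowerSeries.X v : MvPowerSeries σ ℂ) ^ r * h) = MvPowerSeries.coeff μ h := by
    rw [MvPowerSeries.X_pow_eq, MvPowerSeries.coeff_monomial_mul,
      if_pos le_add_self, one_mul, add_tsub_cancel_right]
  rw [← key]
  apply H
  rw [Finsupp.add_apply, Finsupp.single_eq_same]
  omega

lemma OZ_pssubst {v0 : σ} {v : τ'} {r : ℕ} {a : σ → MvPowerSeries τ' ℂ}
    {f : MvPowerSeries σ ℂ} (hf : OZ (wv v0) r f) (ha : OZ (wv v) 1 (a v0)) :
    OZ (wv v) r (pssubst a f) := by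
  rw [OZ_wv_iff]
  intro μ hμ
  rw [coeff_pssubst]
  refine Finset.sum_eq_zero fun d _ => ?_
  rcases Nat.lt_or_ge (d v0) r with hc | hc
  · rw [OZ_wv_iff.1 hf d hc, zero_mul]
  · have hprod : OZ (wv v) (d v0) (∏ i, a i ^ d i) := by
      rw [← Finset.mul_prod_erase Finset.univ _ (Finset.mem_univ v0)]
      have h1 : OZ (wv v) (d v0 * 1) (a v0 ^ d v0) := OZ_pow ha (d v0)
      rw [mul_one] at h1
      exact OZ_mul_right _ h1
    rw [OZ_wv_iff.1 hprod μ (by omega), mul_zero]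

lemma one_add_pow_eq {R : Type*} [CommRing R] (x : R) (k : ℕ) :
    ∃ c : R, (1 + x) ^ k = 1 + (k : R) * x + x ^ 2 * c := by
  induction k with
  | zero => exact ⟨0, by simp⟩
  | succ k ih =>
      obtain ⟨c, hc⟩ := ih
      refine ⟨c + (k : R) + x * c, ?_⟩
      rw [pow_succ, hc]
      push_cast
      ring

lemma mv_X_ne_zero (v : σ) : (MvPowerSeries.X v : MvPowerSeries σ ℂ) ≠ 0 := by
  intro h
  have := MvPowerSeries.coeff_X (Finsupp.single v 1) v (R := ℂ)
  rw [if_pos rfl, h] at this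
  simp at this

lemma mv_C_ne_zero {c : ℂ} (hc : c ≠ 0) : (MvPowerSeries.C (σ := σ) (R := ℂ) c) ≠ 0 := by
  intro h
  have := MvPowerSeries.constantCoeff_C (σ := σ) c
  rw [h] at this
  simp at this
  exact hc this.symm

end Infra

section Specific
set_option linter.unusedSectionVars false
open MvPowerSeries

variable {n : ℕ}

/-- variable renaming (z,w) → (z,τ) -/
def ι1 (n : ℕ) : Wv n → Vv n
  | Sum.inl j => Sum.inl j
  | Sum.inr _ => tv n

lemma ι1_inj : Function.Injective (ι1 n) := by
  intro x y h
  cases x with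
  | inl j => cases y with
    | inl j' => simpa [ι1] using h
    | inr u => simp [ι1, tv] at h
  | inr u => cases y with
    | inl j' => simp [ι1, tv] at h
    | inr u' => cases u; cases u'; rfl

/-- substitution χ := 0 on (z,χ,τ) -/
def sE (n : ℕ) : Vv n → MvPowerSeries (Vv n) ℂ
  | Sum.inl j => MvPowerSeries.X (Sum.inl j)
  | Sum.inr (Sum.inl _) => 0
  | Sum.inr (Sum.inr _) => MvPowerSeries.X (tv n)

/-- substitution z := 0 on (z,χ,τ) -/
def sZ (n : ℕ) : Vv n → MvPowerSeries (Vv n) ℂ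
  | Sum.inl _ => 0
  | Sum.inr (Sum.inl j) => MvPowerSeries.X (Sum.inr (Sum.inl j))
  | Sum.inr (Sum.inr _) => MvPowerSeries.X (tv n)

/-- substitution τ := 0 on (z,χ,τ) -/
def sT (n : ℕ) : Vv n → MvPowerSeries (Vv n) ℂ
  | Sum.inl j => MvPowerSeries.X (Sum.inl j)
  | Sum.inr (Sum.inl j) => MvPowerSeries.X (Sum.inr (Sum.inl j))
  | Sum.inr (Sum.inr _) => 0

/-- substitution (z,w) ↦ (z,τ) -/
def s1 (n : ℕ) : Wv n → MvPowerSeries (Vv n) ℂ := fun i => MvPowerSeries.X (ι1 n i)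

/-- substitution (z,w) ↦ (0,τ) -/
def s0 (n : ℕ) : Wv n → MvPowerSeries (Vv n) ℂ
  | Sum.inl _ => 0
  | Sum.inr _ => MvPowerSeries.X (tv n)

/-- substitution (z,w) ↦ (z,0) -/
def sG0 (n : ℕ) : Wv n → MvPowerSeries (Vv n) ℂ
  | Sum.inl j => MvPowerSeries.X (Sum.inl j)
  | Sum.inr _ => 0

/-- substitution (z,w) ↦ (χ,0) -/
def sH0 (n : ℕ) : Wv n → MvPowerSeries (Vv n) ℂ
  | Sum.inl j => MvPowerSeries.X (Sum.inr (Sum.inl j))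
  | Sum.inr _ => 0

lemma cc_sE : ∀ i, MvPowerSeries.constantCoeff (σ := Vv n) (R := ℂ) (sE n i) = 0 := by
  rintro (j | j | u) <;> simp [sE, MvPowerSeries.constantCoeff_X]

lemma cc_sZ : ∀ i, MvPowerSeries.constantCoeff (σ := Vv n) (R := ℂ) (sZ n i) = 0 := by
  rintro (j | j | u) <;> simp [sZ, MvPowerSeries.constantCoeff_X]

lemma cc_sT : ∀ i, MvPowerSeries.constantCoeff (σ := Vv n) (R := ℂ) (sT n i) = 0 := by
  rintro (j | j | u) <;> simp [sT, MvPowerSeries.constantCoeff_X]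

lemma cc_s1 : ∀ i, MvPowerSeries.constantCoeff (σ := Vv n) (R := ℂ) (s1 n i) = 0 := by
  rintro (j | u) <;> simp [s1, MvPowerSeries.constantCoeff_X]

lemma cc_s0 : ∀ i, MvPowerSeries.constantCoeff (σ := Vv n) (R := ℂ) (s0 n i) = 0 := by
  rintro (j | u) <;> simp [s0, MvPowerSeries.constantCoeff_X]

lemma cc_sG0 : ∀ i, MvPowerSeries.constantCoeff (σ := Vv n) (R := ℂ) (sG0 n i) = 0 := by
  rintro (j | u) <;> simp [sG0, MvPowerSeries.constantCoeff_X]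

lemma cc_sH0 : ∀ i, MvPowerSeries.constantCoeff (σ := Vv n) (R := ℂ) (sH0 n i) = 0 := by
  rintro (j | u) <;> simp [sH0, MvPowerSeries.constantCoeff_X]

lemma cc_sBar : ∀ i, MvPowerSeries.constantCoeff (σ := Vv n) (R := ℂ) (sBar i) = 0 := by
  rintro (j | u) <;> simp [sBar, MvPowerSeries.constantCoeff_X]

/-- the family substituted into Q' in `SendsInto` -/
def Afam {n : ℕ} (Q : MvPowerSeries (Vv n) ℂ) (F : Fin n → MvPowerSeries (Wv n) ℂ)
    (G : MvPowerSeries (Wv n) ℂ) : Vv n → MvPowerSeries (Vv n) ℂ := fun v =>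
  match v with
  | Sum.inl i => pssubst (sLHS Q) (F i)
  | Sum.inr (Sum.inl i) => pssubst sBar (psconj (F i))
  | Sum.inr (Sum.inr _) => pssubst sBar (psconj G)

lemma sendsInto_iff {n : ℕ} (Q Q' : MvPowerSeries (Vv n) ℂ) (F : Fin n → MvPowerSeries (Wv n) ℂ)
    (G : MvPowerSeries (Wv n) ℂ) :
    SendsInto Q Q' F G ↔ pssubst (sLHS Q) G = pssubst (Afam Q F G) Q' := Iff.rfl

end Specific

section Helpers
set_option linter.unusedSectionVars false
open MvPowerSeries

variable {n : ℕ}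

lemma coeff_sG0 (Gt : MvPowerSeries (Wv n) ℂ) (e : Wv n →₀ ℕ) (hew : e (Sum.inr ()) = 0) :
    MvPowerSeries.coeff (Finsupp.mapDomain (ι1 n) e) (pssubst (sG0 n) Gt)
      = MvPowerSeries.coeff e Gt := by
  refine coeff_pssubst_mono ι1_inj ?_ Gt
  rintro (j | u)
  · exact Or.inl rfl
  · exact Or.inr ⟨rfl, by cases u; exact hew⟩

lemma coeff_s1 (Gt : MvPowerSeries (Wv n) ℂ) (e : Wv n →₀ ℕ) :
    MvPowerSeries.coeff (Finsupp.mapDomain (ι1 n) e) (pssubst (s1 n) Gt)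
      = MvPowerSeries.coeff e Gt := by
  refine coeff_pssubst_mono ι1_inj ?_ Gt
  rintro (j | u) <;> exact Or.inl rfl

lemma coeff_sT (f : MvPowerSeries (Vv n) ℂ) (d : Vv n →₀ ℕ) (hd : d (tv n) = 0) :
    MvPowerSeries.coeff d (pssubst (sT n) f) = MvPowerSeries.coeff d f := by
  have h := coeff_pssubst_mono (ι := @id (Vv n)) Function.injective_id
    (a := sT n) (d := d) ?_ f
  · rwa [Finsupp.mapDomain_id] at h
  · rintro (j | j | u)
    · exact Or.inl rfl
    · exact Or.inl rfl
    · exact Or.inr ⟨rfl, by cases u; exact hd⟩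

lemma sE_Qt_eq_zero (Qt : MvPowerSeries (Vv n) ℂ)
    (hQtz0 : ∀ d : Vv n →₀ ℕ, (∀ i, d (Sum.inr (Sum.inl i)) = 0) →
      MvPowerSeries.coeff d Qt = 0) : pssubst (sE n) Qt = 0 :=
  pssubst_eq_zero fun d hd => hQtz0 d fun i => hd (Sum.inr (Sum.inl i)) rfl

lemma sZ_Qt_eq_zero (Qt : MvPowerSeries (Vv n) ℂ)
    (hQtχ0 : ∀ d : Vv n →₀ ℕ, (∀ i, d (Sum.inl i) = 0) →
      MvPowerSeries.coeff d Qt = 0) : pssubst (sZ n) Qt = 0 :=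
  pssubst_eq_zero fun d hd => hQtχ0 d fun i => hd (Sum.inl i) rfl

lemma cc_Qt (Qt : MvPowerSeries (Vv n) ℂ)
    (hQtχ0 : ∀ d : Vv n →₀ ℕ, (∀ i, d (Sum.inl i) = 0) →
      MvPowerSeries.coeff d Qt = 0) :
    MvPowerSeries.constantCoeff (σ := Vv n) (R := ℂ) Qt = 0 := by
  rw [← MvPowerSeries.coeff_zero_eq_constantCoeff_apply]
  exact hQtχ0 0 fun i => rfl

end Helpers

set_option maxHeartbeats 1000000

/-- Proposition (trordest): if H = (F,G) sends the m-infinite type M into the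
m'-infinite type M' and is transversally nonflat with transversal order k, then
(m'-1)·k ≤ m-1. -/
theorem stmt_4 (n m m' : ℕ) (hm : 1 ≤ m) (hm' : 1 ≤ m')
    (Qt Qt' : MvPowerSeries (Vv n) ℂ)
(hQtz0 : ∀ d : Vv n →₀ ℕ, (∀ i, d (Sum.inr (Sum.inl i)) = 0) → MvPowerSeries.coeff d Qt = 0)
    (hQtχ0 : ∀ d : Vv n →₀ ℕ, (∀ i, d (Sum.inl i) = 0) → MvPowerSeries.coeff d Qt = 0)
    (hQtnt : ∃ d : Vv n →₀ ℕ, d (tv n) = 0 ∧ MvPowerSeries.coeff d Qt ≠ 0)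
(hQt'z0 : ∀ d : Vv n →₀ ℕ, (∀ i, d (Sum.inr (Sum.inl i)) = 0) → MvPowerSeries.coeff d Qt' = 0)
    (hQt'χ0 : ∀ d : Vv n →₀ ℕ, (∀ i, d (Sum.inl i) = 0) → MvPowerSeries.coeff d Qt' = 0)
    (hQt'nt : ∃ d : Vv n →₀ ℕ, d (tv n) = 0 ∧ MvPowerSeries.coeff d Qt' ≠ 0)
(F : Fin n → MvPowerSeries (Wv n) ℂ) (G : MvPowerSeries (Wv n) ℂ)
    (hF0 : ∀ i, MvPowerSeries.constantCoeff (F i) = 0)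
    (hG0 : MvPowerSeries.constantCoeff G = 0)
    (hmap : SendsInto (MvPowerSeries.X (tv n) + (MvPowerSeries.X (tv n)) ^ m * Qt)
      (MvPowerSeries.X (tv n) + (MvPowerSeries.X (tv n)) ^ m' * Qt') F G)
    (k : ℕ)
    (htr : ∃ Gt : MvPowerSeries (Wv n) ℂ,
      G = (MvPowerSeries.X (Sum.inr ())) ^ k * Gt ∧
      ∃ e : Wv n →₀ ℕ, e (Sum.inr ()) = 0 ∧ MvPowerSeries.coeff e Gt ≠ 0) :
    (m' - 1) * k ≤ m - 1 := by
  classical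
  obtain ⟨Gt, hGdec, e, hew, heGt⟩ := htr
  obtain ⟨d0, hd0t, hd0⟩ := hQtnt
  by_contra hcon
  push_neg at hcon
  have hk1 : 1 ≤ k := by
    rcases Nat.eq_zero_or_pos k with h | h
    · subst h; simp at hcon
    · exact h
  have hm'2 : 2 ≤ m' := by
    rcases (by omega : m' = 1 ∨ 2 ≤ m') with h | h
    · subst h; simp at hcon
    · exact h
  have hbig : m ≤ (m' - 1) * k := by omega
  set t : MvPowerSeries (Vv n) ℂ := MvPowerSeries.X (tv n) with ht
  set Q : MvPowerSeries (Vv n) ℂ := t + t ^ m * Qt with hQdef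
  set u : MvPowerSeries (Vv n) ℂ := 1 + t ^ (m - 1) * Qt with hu
  have ccQ : MvPowerSeries.constantCoeff (σ := Vv n) (R := ℂ) Q = 0 := by
    rw [hQdef, ht]
    rw [map_add, map_mul, map_pow, MvPowerSeries.constantCoeff_X]
    rw [zero_pow (by omega : m ≠ 0)]
    ring
  have hsL : ∀ i, MvPowerSeries.constantCoeff (σ := Vv n) (R := ℂ) (sLHS Q i) = 0 := by
    rintro (j | u)
    · simp [sLHS, MvPowerSeries.constantCoeff_X]
    · exact ccQ
  have ccA : ∀ v, MvPowerSeries.constantCoeff (σ := Vv n) (R := ℂ) (Afam Q F G v) = 0 := by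
    rintro (i | i | v)
    · show MvPowerSeries.constantCoeff (σ := Vv n) (R := ℂ) (pssubst (sLHS Q) (F i)) = 0
      rw [constantCoeff_pssubst]; exact hF0 i
    · show MvPowerSeries.constantCoeff (σ := Vv n) (R := ℂ) (pssubst sBar (psconj (F i))) = 0
      rw [constantCoeff_pssubst, psconj, MvPowerSeries.constantCoeff_map, hF0 i, map_zero]
    · show MvPowerSeries.constantCoeff (σ := Vv n) (R := ℂ) (pssubst sBar (psconj G)) = 0
      rw [constantCoeff_pssubst, psconj, MvPowerSeries.constantCoeff_map, hG0, map_zero]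
  rw [sendsInto_iff] at hmap
  set A := Afam Q F G with hA
  set P := pssubst A Qt' with hP
  set b := pssubst sBar (psconj Gt) with hb
  set ΦGt := pssubst (sLHS Q) Gt with hΦ
  have hAτ : A (tv n) = pssubst sBar (psconj G) := rfl
  have hconjG : psconj G
      = (MvPowerSeries.X (Sum.inr ()) : MvPowerSeries (Wv n) ℂ) ^ k * psconj Gt := by
    rw [hGdec, psconj, map_mul, map_pow, MvPowerSeries.map_X]; rfl
  have hBarG : pssubst sBar (psconj G) = t ^ k * b := by
    rw [hconjG, pssubst_mul cc_sBar, pssubst_pow cc_sBar, pssubst_X cc_sBar, hb]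
    rfl
  have hRHS : pssubst A (t + t ^ m' * Qt') = t ^ k * b + (t ^ k * b) ^ m' * P := by
    rw [ht, pssubst_add, pssubst_mul ccA, pssubst_pow ccA, pssubst_X ccA, hAτ, hBarG, hP]
  have hLHS : pssubst (sLHS Q) G = Q ^ k * ΦGt := by
    rw [hGdec, pssubst_mul hsL, pssubst_pow hsL, pssubst_X hsL, hΦ]
    rfl
  have hm1 : m - 1 + 1 = m := by omega
  have htm : t ^ m = t ^ (m - 1) * t := by
    conv_lhs => rw [← hm1]
    rw [pow_succ]
  have hQu : Q = t * u := by
    rw [hQdef, hu, mul_add, mul_one, htm]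
    ring
  have harith : k * m' = k + (m' - 1) * k := by
    have h2 : m' - 1 + 1 = m' := by omega
    calc k * m' = k * ((m' - 1) + 1) := by rw [h2]
      _ = k + (m' - 1) * k := by ring
  have MAIN : u ^ k * ΦGt = b + t ^ ((m' - 1) * k) * (b ^ m' * P) := by
    refine mul_left_cancel₀ (pow_ne_zero k (mv_X_ne_zero (tv n))) ?_
    have e1 := hmap
    rw [hLHS, hRHS, hQu] at e1
    calc t ^ k * (u ^ k * ΦGt) = (t * u) ^ k * ΦGt := by rw [mul_pow]; ring
      _ = t ^ k * b + (t ^ k * b) ^ m' * P := e1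
      _ = t ^ k * (b + t ^ ((m' - 1) * k) * (b ^ m' * P)) := by
          rw [mul_pow, ← pow_mul, harith, pow_add]
          ring
  have hDm : OZ (wv (tv n)) m (u ^ k * ΦGt - b) := by
    rw [MAIN, add_sub_cancel_left]
    exact OZ_mono hbig (OZ_mul_right _ (OZ_X_pow (tv n) ((m' - 1) * k)))
  rcases (by omega : m = 1 ∨ 2 ≤ m) with hm1' | hm2
  · -- case m = 1
    subst hm1'
    set q0 := pssubst (sT n) Qt with hq0
    set g0 := pssubst (sG0 n) Gt with hg0
    set h0 := pssubst (sH0 n) (psconj Gt) with hh0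
    have hTt : pssubst (sT n) t = 0 := by rw [ht, pssubst_X cc_sT]; rfl
    have hTQ : pssubst (sT n) Q = 0 := by
      rw [hQdef, pssubst_add, pssubst_mul cc_sT, pssubst_pow cc_sT, hTt]
      simp
    have hfamTL : (fun i => pssubst (sT n) (sLHS Q i)) = sG0 n := by
      funext i
      cases i with
      | inl j =>
          show pssubst (sT n) (MvPowerSeries.X (Sum.inl j)) = sG0 n (Sum.inl j)
          rw [pssubst_X cc_sT]; rfl
      | inr v => exact hTQ
    have hTΦ : pssubst (sT n) ΦGt = g0 := by
      rw [hΦ, pssubst_comp hsL cc_sT, hfamTL, hg0]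
    have hfamTB : (fun i => pssubst (sT n) (sBar i)) = sH0 n := by
      funext i
      cases i with
      | inl j =>
          show pssubst (sT n) (MvPowerSeries.X (Sum.inr (Sum.inl j))) = sH0 n (Sum.inl j)
          rw [pssubst_X cc_sT]; rfl
      | inr v =>
          show pssubst (sT n) (MvPowerSeries.X (Sum.inr (Sum.inr ()))) = sH0 n (Sum.inr v)
          rw [show (Sum.inr (Sum.inr ()) : Vv n) = tv n from rfl, pssubst_X cc_sT]; rfl
    have hTb : pssubst (sT n) b = h0 := by
      rw [hb, pssubst_comp cc_sBar cc_sT, hfamTB, hh0]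
    have hTu : pssubst (sT n) u = 1 + q0 := by
      rw [hu, show (1:ℕ) - 1 = 0 from rfl, pow_zero, one_mul, pssubst_add, pssubst_one, hq0]
    have S1 : (1 + q0) ^ k * g0 = h0 := by
      have happ := congrArg (pssubst (sT n)) MAIN
      rw [pssubst_mul cc_sT, pssubst_pow cc_sT, hTu, hTΦ, pssubst_add, hTb,
        pssubst_mul cc_sT, pssubst_pow cc_sT, hTt,
        zero_pow (by omega : (m' - 1) * k ≠ 0), zero_mul, add_zero] at happ
      exact happ
    have hEq0 : pssubst (sE n) q0 = 0 := by
      rw [hq0, pssubst_comp cc_sT cc_sE]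
      refine pssubst_eq_zero fun d hd => hQtz0 d fun i => hd (Sum.inr (Sum.inl i)) ?_
      show pssubst (sE n) (sT n (Sum.inr (Sum.inl i))) = 0
      rw [show sT n (Sum.inr (Sum.inl i))
          = MvPowerSeries.X (Sum.inr (Sum.inl i)) from rfl, pssubst_X cc_sE]
      rfl
    have hfamEG0 : (fun i => pssubst (sE n) (sG0 n i)) = sG0 n := by
      funext i
      cases i with
      | inl j =>
          show pssubst (sE n) (MvPowerSeries.X (Sum.inl j)) = sG0 n (Sum.inl j)
          rw [pssubst_X cc_sE]; rfl
      | inr v =>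
          show pssubst (sE n) 0 = sG0 n (Sum.inr v)
          rw [pssubst_zero]; rfl
    have hEg0 : pssubst (sE n) g0 = g0 := by
      rw [hg0, pssubst_comp cc_sG0 cc_sE, hfamEG0]
    have hfamEH0 : (fun i => pssubst (sE n) (sH0 n i))
        = (fun _ => (0 : MvPowerSeries (Vv n) ℂ)) := by
      funext i
      cases i with
      | inl j =>
          show pssubst (sE n) (MvPowerSeries.X (Sum.inr (Sum.inl j))) = 0
          rw [pssubst_X cc_sE]; rfl
      | inr v =>
          show pssubst (sE n) 0 = 0
          rw [pssubst_zero]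
    have hEh0 : pssubst (sE n) h0 = MvPowerSeries.C (σ := Vv n) (R := ℂ)
        (MvPowerSeries.constantCoeff (σ := Wv n) (R := ℂ) (psconj Gt)) := by
      rw [hh0, pssubst_comp cc_sH0 cc_sE, hfamEH0, pssubst_zero_family]
    have hg0C : g0 = MvPowerSeries.C (σ := Vv n) (R := ℂ)
        (MvPowerSeries.constantCoeff (σ := Wv n) (R := ℂ) (psconj Gt)) := by
      have happ := congrArg (pssubst (sE n)) S1
      rw [pssubst_mul cc_sE, pssubst_pow cc_sE, pssubst_add, pssubst_one, hEq0, add_zero,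
        one_pow, one_mul, hEg0, hEh0] at happ
      exact happ
    have hZq0 : pssubst (sZ n) q0 = 0 := by
      rw [hq0, pssubst_comp cc_sT cc_sZ]
      refine pssubst_eq_zero fun d hd => hQtχ0 d fun i => hd (Sum.inl i) ?_
      show pssubst (sZ n) (sT n (Sum.inl i)) = 0
      rw [show sT n (Sum.inl i) = MvPowerSeries.X (Sum.inl i) from rfl, pssubst_X cc_sZ]
      rfl
    have hfamZG0 : (fun i => pssubst (sZ n) (sG0 n i))
        = (fun _ => (0 : MvPowerSeries (Vv n) ℂ)) := by
      funext i
      cases i with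
      | inl j =>
          show pssubst (sZ n) (MvPowerSeries.X (Sum.inl j)) = 0
          rw [pssubst_X cc_sZ]; rfl
      | inr v =>
          show pssubst (sZ n) 0 = 0
          rw [pssubst_zero]
    have hZg0 : pssubst (sZ n) g0 = MvPowerSeries.C (σ := Vv n) (R := ℂ)
        (MvPowerSeries.constantCoeff (σ := Wv n) (R := ℂ) Gt) := by
      rw [hg0, pssubst_comp cc_sG0 cc_sZ, hfamZG0, pssubst_zero_family]
    have hfamZH0 : (fun i => pssubst (sZ n) (sH0 n i)) = sH0 n := by
      funext i
      cases i with
      | inl j =>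
          show pssubst (sZ n) (MvPowerSeries.X (Sum.inr (Sum.inl j))) = sH0 n (Sum.inl j)
          rw [pssubst_X cc_sZ]; rfl
      | inr v =>
          show pssubst (sZ n) 0 = sH0 n (Sum.inr v)
          rw [pssubst_zero]; rfl
    have hZh0 : pssubst (sZ n) h0 = h0 := by
      rw [hh0, pssubst_comp cc_sH0 cc_sZ, hfamZH0]
    have hh0C : h0 = MvPowerSeries.C (σ := Vv n) (R := ℂ)
        (MvPowerSeries.constantCoeff (σ := Wv n) (R := ℂ) Gt) := by
      have happ := congrArg (pssubst (sZ n)) S1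
      rw [pssubst_mul cc_sZ, pssubst_pow cc_sZ, pssubst_add, pssubst_one, hZq0, add_zero,
        one_pow, one_mul, hZg0, hZh0] at happ
      exact happ.symm
    -- coefficient extraction
    have hcoe : MvPowerSeries.coeff (Finsupp.mapDomain (ι1 n) e) g0
        = MvPowerSeries.coeff e Gt := by
      rw [hg0]; exact coeff_sG0 Gt e hew
    rw [hg0C, MvPowerSeries.coeff_C] at hcoe
    by_cases hmd : Finsupp.mapDomain (ι1 n) e = (0 : Vv n →₀ ℕ)
    · have he0 : e = 0 := Finsupp.mapDomain_injective ι1_inj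
        (hmd.trans (Finsupp.mapDomain_zero).symm)
      rw [if_pos hmd] at hcoe
      have hc0e : MvPowerSeries.coeff e Gt
          = MvPowerSeries.constantCoeff (σ := Wv n) (R := ℂ) Gt := by
        rw [he0, MvPowerSeries.coeff_zero_eq_constantCoeff_apply]
      have hconjcc : MvPowerSeries.constantCoeff (σ := Wv n) (R := ℂ) (psconj Gt)
          = MvPowerSeries.constantCoeff (σ := Wv n) (R := ℂ) Gt := by
        rw [hcoe, hc0e]
      have hc0ne : MvPowerSeries.constantCoeff (σ := Wv n) (R := ℂ) Gt ≠ 0 := by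
        rw [← hc0e]; exact heGt
      rw [hconjcc] at hg0C
      rw [hg0C, hh0C] at S1
      have hpow1 : (1 + q0) ^ k = 1 := by
        refine mul_right_cancel₀ (mv_C_ne_zero hc0ne) ?_
        rw [S1, one_mul]
      have hgeo := geom_sum_mul (1 + q0) k
      rw [hpow1, sub_self, add_sub_cancel_left] at hgeo
      have hSne : (∑ i ∈ Finset.range k, (1 + q0) ^ i) ≠ 0 := by
        intro hS
        have hccS := congrArg (MvPowerSeries.constantCoeff (σ := Vv n) (R := ℂ)) hS
        rw [map_sum, map_zero] at hccS
        have h1 : ∀ i ∈ Finset.range k,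
            MvPowerSeries.constantCoeff (σ := Vv n) (R := ℂ) ((1 + q0) ^ i) = 1 := by
          intro i _
          rw [map_pow, map_add, map_one, hq0, constantCoeff_pssubst,
            cc_Qt Qt hQtχ0, add_zero, one_pow]
        rw [Finset.sum_congr rfl h1, Finset.sum_const, Finset.card_range,
          nsmul_eq_mul, mul_one] at hccS
        exact (by omega : k ≠ 0) (Nat.cast_eq_zero.1 hccS)
      have hq00 : q0 = 0 := by
        rcases mul_eq_zero.1 hgeo with hc | hc
        · exact absurd hc hSne
        · exact hc
      apply hd0
      rw [← coeff_sT Qt d0 hd0t, ← hq0, hq00, map_zero]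
    · rw [if_neg hmd] at hcoe
      exact heGt hcoe.symm
  · -- case 2 ≤ m
    set x : MvPowerSeries (Vv n) ℂ := t ^ (m - 1) * Qt with hx0
    set g := pssubst (s1 n) Gt with hg
    set b0 := pssubst (s0 n) (psconj Gt) with hb0
    set h1 := pssubst (s0 n) Gt with hh1
    set g0 := pssubst (sG0 n) Gt with hg0
    have hsub : OZ (wv (tv n)) m (ΦGt - g) := by
      rw [hΦ, hg]
      refine OZ_pssubst_sub ?_ Gt
      rintro (j | v)
      · have hz : sLHS Q (Sum.inl j) - s1 n (Sum.inl j) = 0 := by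
          show MvPowerSeries.X (Sum.inl j) - MvPowerSeries.X (ι1 n (Sum.inl j)) = 0
          rw [show ι1 n (Sum.inl j) = Sum.inl j from rfl, sub_self]
        rw [hz]; exact OZ_zero _ _
      · have hz : sLHS Q (Sum.inr v) - s1 n (Sum.inr v) = t ^ m * Qt := by
          show Q - MvPowerSeries.X (ι1 n (Sum.inr v)) = t ^ m * Qt
          rw [show ι1 n (Sum.inr v) = tv n from rfl, ← ht, hQdef]
          ring
        rw [hz]
        exact OZ_mul_right _ (OZ_X_pow (tv n) m)
    have hxOZ : OZ (wv (tv n)) (m - 1) x := by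
      rw [hx0]
      exact OZ_mul_right _ (OZ_X_pow (tv n) (m - 1))
    obtain ⟨cb, hcb⟩ := one_add_pow_eq x k
    have h2m : OZ (wv (tv n)) m (x ^ 2 * cb) := by
      refine OZ_mono (by omega : m ≤ (m - 1) + (m - 1)) (OZ_mul_right _ ?_)
      rw [pow_two]
      exact OZ_mul hxOZ hxOZ
    have hKC : ((k : ℕ) : MvPowerSeries (Vv n) ℂ) = MvPowerSeries.C (σ := Vv n) (R := ℂ) ((k : ℕ) : ℂ) :=
      (map_natCast (MvPowerSeries.C (σ := Vv n) (R := ℂ)) k).symm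
    have T1 : OZ (wv (tv n)) m
        ((1 + ((k : ℕ) : MvPowerSeries (Vv n) ℂ) * x) * g - b) := by
      have heq : (1 + ((k : ℕ) : MvPowerSeries (Vv n) ℂ) * x) * g - b
          = (u ^ k * ΦGt - b) - u ^ k * (ΦGt - g) - (x ^ 2 * cb) * g := by
        rw [hu, hcb]
        ring
      rw [heq]
      exact OZ_sub (OZ_sub hDm (OZ_mul_left _ hsub)) (OZ_mul_right _ h2m)
    have haE : OZ (wv (tv n)) 1 (sE n (tv n)) := by
      have h := OZ_X_pow (tv n) 1 (σ := Vv n)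
      rw [pow_one] at h
      exact h
    have haZ : OZ (wv (tv n)) 1 (sZ n (tv n)) := by
      have h := OZ_X_pow (tv n) 1 (σ := Vv n)
      rw [pow_one] at h
      exact h
    have hfamE1 : (fun i => pssubst (sE n) (s1 n i)) = s1 n := by
      funext i
      cases i with
      | inl j =>
          show pssubst (sE n) (MvPowerSeries.X (ι1 n (Sum.inl j))) = s1 n (Sum.inl j)
          rw [show ι1 n (Sum.inl j) = Sum.inl j from rfl, pssubst_X cc_sE]
          rfl
      | inr v =>
          show pssubst (sE n) (MvPowerSeries.X (ι1 n (Sum.inr v))) = s1 n (Sum.inr v)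
          rw [show ι1 n (Sum.inr v) = tv n from rfl, pssubst_X cc_sE]
          rfl
    have hEg : pssubst (sE n) g = g := by
      rw [hg, pssubst_comp cc_s1 cc_sE, hfamE1]
    have hfamE2 : (fun i => pssubst (sE n) (sBar i)) = s0 n := by
      funext i
      cases i with
      | inl j =>
          show pssubst (sE n) (MvPowerSeries.X (Sum.inr (Sum.inl j))) = s0 n (Sum.inl j)
          rw [pssubst_X cc_sE]
          rfl
      | inr v =>
          show pssubst (sE n) (MvPowerSeries.X (Sum.inr (Sum.inr ()))) = s0 n (Sum.inr v)
          rw [show (Sum.inr (Sum.inr ()) : Vv n) = tv n from rfl, pssubst_X cc_sE]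
          rfl
    have hEb : pssubst (sE n) b = b0 := by
      rw [hb, hb0, pssubst_comp cc_sBar cc_sE, hfamE2]
    have hfamZ1 : (fun i => pssubst (sZ n) (s1 n i)) = s0 n := by
      funext i
      cases i with
      | inl j =>
          show pssubst (sZ n) (MvPowerSeries.X (ι1 n (Sum.inl j))) = s0 n (Sum.inl j)
          rw [show ι1 n (Sum.inl j) = Sum.inl j from rfl, pssubst_X cc_sZ]
          rfl
      | inr v =>
          show pssubst (sZ n) (MvPowerSeries.X (ι1 n (Sum.inr v))) = s0 n (Sum.inr v)
          rw [show ι1 n (Sum.inr v) = tv n from rfl, pssubst_X cc_sZ]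
          rfl
    have hZg : pssubst (sZ n) g = h1 := by
      rw [hg, hh1, pssubst_comp cc_s1 cc_sZ, hfamZ1]
    have hfamZ2 : (fun i => pssubst (sZ n) (sBar i)) = sBar (n := n) := by
      funext i
      cases i with
      | inl j =>
          show pssubst (sZ n) (MvPowerSeries.X (Sum.inr (Sum.inl j))) = sBar (Sum.inl j)
          rw [pssubst_X cc_sZ]
          rfl
      | inr v =>
          show pssubst (sZ n) (MvPowerSeries.X (Sum.inr (Sum.inr ()))) = sBar (Sum.inr v)
          rw [show (Sum.inr (Sum.inr ()) : Vv n) = tv n from rfl, pssubst_X cc_sZ]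
          rfl
    have hZb : pssubst (sZ n) b = b := by
      rw [hb, pssubst_comp cc_sBar cc_sZ, hfamZ2]
    have hfamZ3 : (fun i => pssubst (sZ n) (s0 n i)) = s0 n := by
      funext i
      cases i with
      | inl j =>
          show pssubst (sZ n) (0 : MvPowerSeries (Vv n) ℂ) = s0 n (Sum.inl j)
          rw [pssubst_zero]
          rfl
      | inr v =>
          show pssubst (sZ n) (MvPowerSeries.X (tv n)) = s0 n (Sum.inr v)
          rw [pssubst_X cc_sZ]
          rfl
    have hZb0 : pssubst (sZ n) b0 = b0 := by
      rw [hb0, pssubst_comp cc_s0 cc_sZ, hfamZ3]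
    have hone : ∀ (c : Vv n → MvPowerSeries (Vv n) ℂ), (∀ i, MvPowerSeries.constantCoeff (c i) = 0) →
        pssubst c Qt = 0 →
        pssubst c ((1 + ((k : ℕ) : MvPowerSeries (Vv n) ℂ) * x) * g - b)
          = pssubst c g - pssubst c b := by
      intro c hc hcQt
      rw [pssubst_sub, pssubst_mul hc, pssubst_add, pssubst_one, pssubst_mul hc, hKC,
        pssubst_C, hx0, pssubst_mul hc, hcQt, mul_zero, mul_zero, add_zero, one_mul]
    have R1 : OZ (wv (tv n)) m (g - b0) := by
      have hE1 := OZ_pssubst (v0 := tv n) T1 haE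
      rw [hone (sE n) cc_sE (sE_Qt_eq_zero Qt hQtz0), hEg, hEb] at hE1
      exact hE1
    have R2 : OZ (wv (tv n)) m (h1 - b) := by
      have hZ1 := OZ_pssubst (v0 := tv n) T1 haZ
      rw [hone (sZ n) cc_sZ (sZ_Qt_eq_zero Qt hQtχ0), hZg, hZb] at hZ1
      exact hZ1
    have R3 : OZ (wv (tv n)) m (h1 - b0) := by
      have hZ2 := OZ_pssubst (v0 := tv n) R1 haZ
      rw [pssubst_sub, hZg, hZb0] at hZ2
      exact hZ2
    have hgb : OZ (wv (tv n)) m (g - b) := by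
      have heq2 : g - b = ((g - b0) - (h1 - b0)) + (h1 - b) := by ring
      rw [heq2]
      exact OZ_add (OZ_sub R1 R3) R2
    have hKxg : OZ (wv (tv n)) m (((k : ℕ) : MvPowerSeries (Vv n) ℂ) * x * g) := by
      have heq3 : ((k : ℕ) : MvPowerSeries (Vv n) ℂ) * x * g
          = ((1 + ((k : ℕ) : MvPowerSeries (Vv n) ℂ) * x) * g - b) - (g - b) := by ring
      rw [heq3]
      exact OZ_sub T1 hgb
    have h5 : OZ (wv (tv n)) ((m - 1) + 1)
        (MvPowerSeries.X (tv n) ^ (m - 1) *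
          (((k : ℕ) : MvPowerSeries (Vv n) ℂ) * (Qt * g))) := by
      rw [hm1]
      have heq4 : MvPowerSeries.X (tv n) ^ (m - 1) *
          (((k : ℕ) : MvPowerSeries (Vv n) ℂ) * (Qt * g))
          = ((k : ℕ) : MvPowerSeries (Vv n) ℂ) * x * g := by
        rw [hx0, ht]
        ring
      rw [heq4]
      exact hKxg
    have hq1 : OZ (wv (tv n)) 1 (((k : ℕ) : MvPowerSeries (Vv n) ℂ) * (Qt * g)) :=
      OZ_shift h5
    have hT0 : pssubst (sT n) (((k : ℕ) : MvPowerSeries (Vv n) ℂ) * (Qt * g)) = 0 := by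
      refine pssubst_eq_zero fun d hd => ?_
      refine OZ_wv_iff.1 hq1 d ?_
      have := hd (tv n) rfl
      omega
    rw [pssubst_mul cc_sT, pssubst_mul cc_sT, hKC, pssubst_C] at hT0
    have hKne : MvPowerSeries.C (σ := Vv n) (R := ℂ) ((k : ℕ) : ℂ) ≠ 0 :=
      mv_C_ne_zero (Nat.cast_ne_zero.2 (by omega))
    have hfamT1 : (fun i => pssubst (sT n) (s1 n i)) = sG0 n := by
      funext i
      cases i with
      | inl j =>
          show pssubst (sT n) (MvPowerSeries.X (ι1 n (Sum.inl j))) = sG0 n (Sum.inl j)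
          rw [show ι1 n (Sum.inl j) = Sum.inl j from rfl, pssubst_X cc_sT]
          rfl
      | inr v =>
          show pssubst (sT n) (MvPowerSeries.X (ι1 n (Sum.inr v))) = sG0 n (Sum.inr v)
          rw [show ι1 n (Sum.inr v) = tv n from rfl, pssubst_X cc_sT]
          rfl
    have hTg : pssubst (sT n) g = g0 := by
      rw [hg, hg0, pssubst_comp cc_s1 cc_sT, hfamT1]
    rcases mul_eq_zero.1 hT0 with hc | hc
    · exact hKne hc
    rcases mul_eq_zero.1 hc with hc2 | hc2
    · apply hd0
      rw [← coeff_sT Qt d0 hd0t, hc2, map_zero]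
    · apply heGt
      rw [hTg] at hc2
      rw [← coeff_sG0 Gt e hew, hg0] at *
      rw [hc2, map_zero]
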